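/- Let K be a field of characteristic zero and let f ∈ K[[T]] have zero constant term. Suppose f is an endomorphism of the multiplicative formal group, i.e., f(X + Y + XY) = f(X) + f(Y) + f(X)·f(Y) in K[[X,Y]], and suppose the coefficient of T in f equals 1. Then f = T. (Every normalized endomorphism of the formal multiplicative group over a field of characteristic zero is the identity; this is the one-dimensional, characteristic-zero core of Proposition 3.5.2.) -/

import Mathlib

/-- Substitution of a multivariate power series `g` (intended to have zero constant
coefficient) into a one-variable power series `f`, i.e. `f(g) = ∑ₙ (coeffₙ f) · gⁿ`.
Each coefficient of the result is given by the finite truncated sum, which agrees with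
the genuine substitution whenever `g` has zero constant coefficient. -/
noncomputable def PowerSeries.substMv {σ R : Type*} [CommRing R]
    (g : MvPowerSeries σ R) (f : PowerSeries R) : MvPowerSeries σ R :=
  fun d => ∑ n ∈ Finset.range (d.sum (fun _ e => e) + 1),
    PowerSeries.coeff n f * MvPowerSeries.coeff d (g ^ n)

lemma MulFG.apply_le_sum {σ : Type*} (e : σ →₀ ℕ) (i : σ) :
    e i ≤ e.sum (fun _ x => x) := by
  by_cases h : e i = 0
  · simp [h]
  · exact Finset.single_le_sum (fun _ _ => Nat.zero_le _) (Finsupp.mem_support_iff.mpr h)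

lemma MulFG.coeff_substMv {σ : Type*} {K : Type*} [Field K] (f : PowerSeries K)
    (g : MvPowerSeries σ K) (e : σ →₀ ℕ) :
    MvPowerSeries.coeff e (PowerSeries.substMv g f)
      = ∑ n ∈ Finset.range (e.sum (fun _ x => x) + 1),
        PowerSeries.coeff n f * MvPowerSeries.coeff e (g ^ n) := rfl

lemma MulFG.coeff_substMv_X {K : Type*} [Field K] (f : PowerSeries K) (i : Fin 2)
    (e : Fin 2 →₀ ℕ) :
    MvPowerSeries.coeff e (PowerSeries.substMv (MvPowerSeries.X i) f)
      = if e = Finsupp.single i (e i) then PowerSeries.coeff (e i) f else 0 := by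
  rw [MulFG.coeff_substMv]
  simp only [MvPowerSeries.coeff_X_pow]
  rw [Finset.sum_eq_single (e i)]
  · split_ifs with h
    · rw [mul_one]
    · rw [mul_zero]
  · intro n _ hne
    rw [if_neg, mul_zero]
    intro he
    exact hne (by rw [he]; simp)
  · intro h
    exact absurd (Finset.mem_range.mpr (Nat.lt_succ_of_le (MulFG.apply_le_sum e i))) h

lemma MulFG.coeff_substMv_prod {K : Type*} [Field K] (f : PowerSeries K) (m : ℕ) :
    MvPowerSeries.coeff (Finsupp.single (0 : Fin 2) 1 + Finsupp.single 1 m)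
      (PowerSeries.substMv (MvPowerSeries.X 0) f * PowerSeries.substMv (MvPowerSeries.X 1) f)
    = PowerSeries.coeff 1 f * PowerSeries.coeff m f := by
  set d : Fin 2 →₀ ℕ := Finsupp.single (0 : Fin 2) 1 + Finsupp.single 1 m with hd
  rw [MvPowerSeries.coeff_mul]
  rw [Finset.sum_eq_single ((Finsupp.single (0:Fin 2) 1, Finsupp.single (1:Fin 2) m))]
  · rw [MulFG.coeff_substMv_X, MulFG.coeff_substMv_X]
    rw [if_pos (by simp), if_pos (by simp)]
    simp
  · rintro ⟨p, q⟩ hmem hne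
    simp only [Finset.HasAntidiagonal.mem_antidiagonal] at hmem
    rw [MulFG.coeff_substMv_X, MulFG.coeff_substMv_X]
    by_cases hp : p = Finsupp.single 0 (p 0)
    · by_cases hq : q = Finsupp.single 1 (q 1)
      · exfalso
        apply hne
        have h0 : p 0 + q 0 = 1 := by
          have := DFunLike.congr_fun hmem 0
          simpa [hd, Finsupp.single_apply] using this
        have h1 : p 1 + q 1 = m := by
          have := DFunLike.congr_fun hmem 1
          simpa [hd, Finsupp.single_apply] using this
        have hq0 : q 0 = 0 := by rw [hq]; simp [Finsupp.single_apply]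
        have hp1 : p 1 = 0 := by rw [hp]; simp [Finsupp.single_apply]
        have hp0 : p 0 = 1 := by omega
        have hq1 : q 1 = m := by omega
        have hP : p = Finsupp.single 0 1 := by rw [hp, hp0]
        have hQ : q = Finsupp.single 1 m := by rw [hq, hq1]
        rw [hP, hQ]
      · rw [if_neg hq, mul_zero]
    · rw [if_neg hp, zero_mul]
  · intro h
    exact absurd (Finset.HasAntidiagonal.mem_antidiagonal.mpr hd.symm) h

open MvPowerSeries in
lemma MulFG.coeff_trinomial_pow {K : Type*} [Field K] (m k : ℕ) :
    MvPowerSeries.coeff (Finsupp.single (0 : Fin 2) 1 + Finsupp.single 1 m)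
      ((X 0 + X 1 + X 0 * X 1 : MvPowerSeries (Fin 2) K) ^ k)
    = (k : K) * ((if k = m + 1 then 1 else 0) + (if k = m then 1 else 0)) := by
  set d : Fin 2 →₀ ℕ := Finsupp.single (0 : Fin 2) 1 + Finsupp.single 1 m with hd
  have hd0 : d 0 = 1 := by simp [hd, Finsupp.single_apply]
  have hd1 : d 1 = m := by simp [hd, Finsupp.single_apply]
  rcases Nat.eq_zero_or_pos k with hk | hk
  · subst hk
    rw [pow_zero]
    have : MvPowerSeries.coeff d (1 : MvPowerSeries (Fin 2) K) = 0 := by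
      rw [MvPowerSeries.coeff_one, if_neg]
      intro h
      rw [h] at hd0; simp at hd0
    rw [this]
    have h1 : ¬ (0 = m + 1) := by omega
    simp [h1]
  · have hg : (X 0 + X 1 + X 0 * X 1 : MvPowerSeries (Fin 2) K)
        = X 1 + X 0 * (1 + X 1) := by ring
    rw [hg, add_pow, map_sum]
    have hterm : ∀ j, MvPowerSeries.coeff d
        ((X 1 : MvPowerSeries (Fin 2) K) ^ j * (X 0 * (1 + X 1)) ^ (k - j) * (k.choose j : MvPowerSeries (Fin 2) K))
        = (k.choose j : K) * MvPowerSeries.coeff d ((X 1 : MvPowerSeries (Fin 2) K) ^ j * (X 0 * (1 + X 1)) ^ (k - j)) := by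
      intro j
      rw [mul_comm, ← nsmul_eq_mul, map_nsmul, nsmul_eq_mul]
    have hcoeff : ∀ j, MvPowerSeries.coeff d
        ((X 1 : MvPowerSeries (Fin 2) K) ^ j * (X 0 * (1 + X 1)) ^ (k - j))
        = if k - j = 1 then
            ((if m = j then 1 else 0) + (if m = j + 1 then (1:K) else 0)) else 0 := by
      intro j
      rw [mul_pow, mul_left_comm, MvPowerSeries.X_pow_eq, MvPowerSeries.coeff_monomial_mul]
      by_cases ht : k - j = 1
      · rw [ht, if_pos (Finsupp.single_le_iff.mpr (by rw [hd0])), if_pos rfl]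
        have hsub : d - Finsupp.single (0:Fin 2) 1 = Finsupp.single 1 m := by
          rw [hd]; exact add_tsub_cancel_left _ _
        rw [hsub, pow_one, mul_add, mul_one, ← pow_succ, map_add,
          MvPowerSeries.coeff_X_pow, MvPowerSeries.coeff_X_pow, one_mul]
        congr 1
        · by_cases h : m = j
          · rw [if_pos h, if_pos (by rw [h])]
          · rw [if_neg h, if_neg (fun hh => h
              (Finsupp.single_injective (1 : Fin 2) hh))]
        · by_cases h : m = j + 1
          · rw [if_pos (by rw [h]), if_pos h]
          · rw [if_neg (fun hh => h (Finsupp.single_injective (1 : Fin 2) hh)), if_neg h]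
      · rw [if_neg ht]
        rcases Nat.lt_or_ge 1 (k - j) with h2 | h2
        · rw [if_neg]
          rw [Finsupp.single_le_iff, hd0]
          omega
        · have h0 : k - j = 0 := by omega
          rw [h0]
          rw [if_pos (by simp [Finsupp.single_le_iff])]
          rw [pow_zero, mul_one, one_mul, Finsupp.single_zero, tsub_zero,
            MvPowerSeries.coeff_X_pow, if_neg]
          intro h
          rw [h] at hd0
          simp [Finsupp.single_apply] at hd0
    rw [Finset.sum_congr rfl (fun j _ => (hterm j).trans (by rw [hcoeff j]))]
    rw [Finset.sum_eq_single (k - 1)]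
    · have h1 : k - (k - 1) = 1 := by omega
      rw [if_pos h1]
      have hch : (k.choose (k - 1) : K) = k := by
        rw [Nat.choose_symm hk, Nat.choose_one_right]
      rw [hch]
      congr 1
      congr 1
      · congr 1
        · exact propext (by omega)
      · congr 1
        exact propext (by omega)
    · intro j hj hne
      rw [if_neg (by omega), mul_zero]
    · intro h
      exact absurd (Finset.mem_range.mpr (by omega)) h

/-- Let `K` be a field of characteristic zero and `f ∈ K[[T]]` a power series with
zero constant term which is an endomorphism of the multiplicative formal group, i.e.
`f(X + Y + XY) = f(X) + f(Y) + f(X)·f(Y)` in `K[[X,Y]]`, and whose coefficient of `T`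
equals `1`.  Then `f = T`: every normalized endomorphism of the formal multiplicative
group over a field of characteristic zero is the identity. -/
theorem mulFormalGroup_normalized_end_eq_id {K : Type*} [Field K] [CharZero K]
    (f : PowerSeries K)
    (h0 : PowerSeries.constantCoeff f = 0)
    (h1 : PowerSeries.coeff 1 f = 1)
    (hf : PowerSeries.substMv
            (MvPowerSeries.X 0 + MvPowerSeries.X 1 +
              MvPowerSeries.X 0 * MvPowerSeries.X 1 : MvPowerSeries (Fin 2) K) f
          = PowerSeries.substMv (MvPowerSeries.X 0 : MvPowerSeries (Fin 2) K) f
            + PowerSeries.substMv (MvPowerSeries.X 1 : MvPowerSeries (Fin 2) K) f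
            + PowerSeries.substMv (MvPowerSeries.X 0 : MvPowerSeries (Fin 2) K) f
              * PowerSeries.substMv (MvPowerSeries.X 1 : MvPowerSeries (Fin 2) K) f) :
    f = PowerSeries.X := by
  have hrec : ∀ m : ℕ, 1 ≤ m →
      ((m : K) + 1) * PowerSeries.coeff (m + 1) f + (m : K) * PowerSeries.coeff m f
        = PowerSeries.coeff m f := by
    intro m hm
    have hds : (Finsupp.single (0 : Fin 2) 1 + Finsupp.single 1 m).sum (fun _ x => x)
        = m + 1 := by
      rw [Finsupp.sum_add_index (by simp) (by simp),
        Finsupp.sum_single_index rfl, Finsupp.sum_single_index rfl]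
      omega
    have key := congrArg
      (MvPowerSeries.coeff (Finsupp.single (0 : Fin 2) 1 + Finsupp.single 1 m)) hf
    rw [map_add, map_add, MulFG.coeff_substMv_X, MulFG.coeff_substMv_X,
      MulFG.coeff_substMv_prod, h1, one_mul] at key
    rw [if_neg (fun h => by
        have := DFunLike.congr_fun h 1
        simp [Finsupp.single_apply] at this
        omega),
      if_neg (fun h => by
        have := DFunLike.congr_fun h 0
        simp [Finsupp.single_apply] at this)] at key
    rw [MulFG.coeff_substMv, hds] at key
    simp only [MulFG.coeff_trinomial_pow] at key
    rw [Finset.sum_congr rfl (fun n _ => show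
        PowerSeries.coeff n f * ((n : K) *
          ((if n = m + 1 then 1 else 0) + (if n = m then 1 else 0)))
        = (if n = m + 1 then (n : K) * PowerSeries.coeff n f else 0)
          + (if n = m then (n : K) * PowerSeries.coeff n f else 0) by
        split_ifs <;> ring)] at key
    rw [Finset.sum_add_distrib, Finset.sum_ite_eq', Finset.sum_ite_eq',
      if_pos (Finset.mem_range.mpr (by omega)),
      if_pos (Finset.mem_range.mpr (by omega))] at key
    push_cast at key
    linear_combination key
  have hzero : ∀ n : ℕ, 2 ≤ n → PowerSeries.coeff n f = 0 := by
    intro n hn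
    induction n, hn using Nat.le_induction with
    | base =>
      have h := hrec 1 le_rfl
      rw [h1] at h
      push_cast at h
      have h2 : ((1 : K) + 1) ≠ 0 := by norm_num
      have : ((1 : K) + 1) * PowerSeries.coeff 2 f = 0 := by linear_combination h
      exact (mul_eq_zero.mp this).resolve_left h2
    | succ n hn ih =>
      have h := hrec n (by omega)
      rw [ih] at h
      have hne : ((n : K) + 1) ≠ 0 := by
        have : ((n : K) + 1) = ((n + 1 : ℕ) : K) := by push_cast; ring
        rw [this]
        exact Nat.cast_ne_zero.mpr (by omega)
      have : ((n : K) + 1) * PowerSeries.coeff (n + 1) f = 0 := by linear_combination h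
      exact (mul_eq_zero.mp this).resolve_left hne
  ext n
  rw [PowerSeries.coeff_X]
  match n with
  | 0 => rw [if_neg (by omega), ← h0, PowerSeries.coeff_zero_eq_constantCoeff]
  | 1 => rw [if_pos rfl, h1]
  | (n + 2) => rw [if_neg (by omega), hzero (n + 2) (by omega)]
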